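/- Let k > 0 and β ∈ ℝ with β ≥ −β_c(k). Then the only solution of the stationary beam problem with f = 0 is the null solution u ≡ 0 (the straight equilibrium position). -/

import Mathlib

open Real Set

/-- `μ_n(k) = k/(n²π²) + n²π²`. -/
noncomputable def mu (k : ℝ) (n : ℕ) : ℝ := k / ((n : ℝ)^2 * π^2) + (n : ℝ)^2 * π^2

/-- `β_c(k) = min_{n ≥ 1} μ_n(k)`. -/
noncomputable def betaC (k : ℝ) : ℝ := sInf {x : ℝ | ∃ n : ℕ, 1 ≤ n ∧ x = mu k n}

/-- `u` is a solution of the stationary beam problem with `f = 0`: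
`u ∈ C⁴([0,1])`, `u'''' - (β + ∫₀¹ u'(ξ)² dξ) u'' + k u = 0` on `[0,1]`,
with hinged boundary conditions. -/
def IsStatSol (k β : ℝ) (u : ℝ → ℝ) : Prop :=
  ContDiffOn ℝ 4 u (Icc (0:ℝ) 1) ∧
  (∀ x ∈ Icc (0:ℝ) 1,
    iteratedDerivWithin 4 u (Icc (0:ℝ) 1) x
      - (β + ∫ ξ in (0:ℝ)..1, (iteratedDerivWithin 1 u (Icc (0:ℝ) 1) ξ)^2)
        * iteratedDerivWithin 2 u (Icc (0:ℝ) 1) x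
      + k * u x = 0) ∧
  u 0 = 0 ∧ u 1 = 0 ∧
  iteratedDerivWithin 2 u (Icc (0:ℝ) 1) 0 = 0 ∧
  iteratedDerivWithin 2 u (Icc (0:ℝ) 1) 1 = 0

open MeasureTheory intervalIntegral Complex
open scoped ENNReal NNReal

namespace BeamAux
noncomputable section

local notation "II" => Icc (0:ℝ) 1
variable (u : ℝ → ℝ)

lemma ud : UniqueDiffOn ℝ (Icc (0:ℝ) 1) := uniqueDiffOn_Icc one_pos

def D (i : ℕ) : ℝ → ℝ := iteratedDerivWithin i u (Icc (0:ℝ) 1)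

variable {u}

lemma D_zero : D u 0 = u := by ext x; simp [D]

lemma D_cont (hu : ContDiffOn ℝ 4 u II) {i : ℕ} (hi : i ≤ 4) : ContinuousOn (D u i) II :=
  hu.continuousOn_iteratedDerivWithin (by exact_mod_cast hi) ud

lemma D_deriv (hu : ContDiffOn ℝ 4 u II) {i : ℕ} (hi : i < 4) :
    ∀ x ∈ II, HasDerivWithinAt (D u i) (D u (i+1) x) II x := by
  intro x hx
  have hdiff : DifferentiableOn ℝ (D u i) II :=
    hu.differentiableOn_iteratedDerivWithin (by exact_mod_cast hi) ud
  have h := (hdiff x hx).hasDerivWithinAt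
  rwa [show derivWithin (D u i) II x = D u (i+1) x from
    (congrFun iteratedDerivWithin_succ x).symm] at h

lemma uIcc01 : (uIcc (0:ℝ) 1) = II := uIcc_of_le zero_le_one

lemma intInt {f : ℝ → ℝ} (hf : ContinuousOn f II) : IntervalIntegrable f volume 0 1 :=
  (by rwa [uIcc01] : ContinuousOn f (uIcc (0:ℝ) 1)).intervalIntegrable

lemma ibp {f g f' g' : ℝ → ℝ}
    (hf : ∀ x ∈ II, HasDerivWithinAt f (f' x) II x)
    (hg : ∀ x ∈ II, HasDerivWithinAt g (g' x) II x)
    (hf' : ContinuousOn f' II) (hg' : ContinuousOn g' II) :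
    (∫ x in (0:ℝ)..1, f' x * g x) + (∫ x in (0:ℝ)..1, f x * g' x)
      = f 1 * g 1 - f 0 * g 0 := by
  have hfc : ContinuousOn f II := fun x hx => (hf x hx).continuousWithinAt
  have hgc : ContinuousOn g II := fun x hx => (hg x hx).continuousWithinAt
  rw [← integral_add (f := fun x => f' x * g x) (g := fun x => f x * g' x) (intInt (hf'.mul hgc)) (intInt (hfc.mul hg'))]
  apply integral_deriv_mul_eq_sub_of_hasDerivWithinAt
  · rw [uIcc01]; exact hf
  · rw [uIcc01]; exact hg
  · exact (by rwa [uIcc01] : ContinuousOn f' (uIcc (0:ℝ) 1)).intervalIntegrable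
  · exact (by rwa [uIcc01] : ContinuousOn g' (uIcc (0:ℝ) 1)).intervalIntegrable

/-- the three integrals -/
def Xq (u : ℝ → ℝ) : ℝ := ∫ x in (0:ℝ)..1, (u x)^2
def Yq (u : ℝ → ℝ) : ℝ := ∫ x in (0:ℝ)..1, (D u 1 x)^2
def Zq (u : ℝ → ℝ) : ℝ := ∫ x in (0:ℝ)..1, (D u 2 x)^2

section energy
variable (hu : ContDiffOn ℝ 4 u II) (h0 : u 0 = 0) (h1 : u 1 = 0)
  (h20 : D u 2 0 = 0) (h21 : D u 2 1 = 0)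

lemma u_deriv (hu : ContDiffOn ℝ 4 u II) :
    ∀ x ∈ II, HasDerivWithinAt u (D u 1 x) II x := by
  simpa [D_zero] using D_deriv hu (show 0 < 4 by norm_num)

include hu h0 h1 in
lemma int_D2_mul_u : ∫ x in (0:ℝ)..1, D u 2 x * u x = - Yq u := by
  have h := ibp (f := D u 1) (g := u) (f' := D u 2) (g' := D u 1)
    (D_deriv hu (by norm_num)) (u_deriv hu)
    (D_cont hu (by norm_num)) (D_cont hu (by norm_num))
  rw [h0, h1, mul_zero, mul_zero, sub_zero] at h
  have : ∫ x in (0:ℝ)..1, D u 1 x * D u 1 x = Yq u := by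
    unfold Yq; congr 1; ext x; ring
  linarith [h, this]

include hu h0 h1 h20 h21 in
lemma int_D4_mul_u : ∫ x in (0:ℝ)..1, D u 4 x * u x = Zq u := by
  have h3 := ibp (f := D u 3) (g := u) (f' := D u 4) (g' := D u 1)
    (D_deriv hu (by norm_num)) (u_deriv hu)
    (D_cont hu (by norm_num)) (D_cont hu (by norm_num))
  rw [h0, h1, mul_zero, mul_zero, sub_zero] at h3
  have h2 := ibp (f := D u 2) (g := D u 1) (f' := D u 3) (g' := D u 2)
    (D_deriv hu (by norm_num)) (D_deriv hu (by norm_num))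
    (D_cont hu (by norm_num)) (D_cont hu (by norm_num))
  rw [h20, h21, zero_mul, zero_mul, sub_zero] at h2
  have hy : ∫ x in (0:ℝ)..1, D u 1 x * D u 2 x = ∫ x in (0:ℝ)..1, D u 2 x * D u 1 x := by
    congr 1; ext x; ring
  have hz : ∫ x in (0:ℝ)..1, D u 2 x * D u 2 x = Zq u := by
    unfold Zq; congr 1; ext x; ring
  linarith [h3, h2, hy, hz]

include hu h0 h1 h20 h21 in
lemma energy (k β : ℝ)
    (heq : ∀ x ∈ II, D u 4 x - (β + Yq u) * D u 2 x + k * u x = 0) :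
    Zq u + (β + Yq u) * Yq u + k * Xq u = 0 := by
  have hcu : ContinuousOn u II := by simpa [D_zero] using D_cont (i := 0) hu (by norm_num)
  have hc2 : ContinuousOn (D u 2) II := D_cont (i := 2) hu (by norm_num)
  have hc4 : ContinuousOn (D u 4) II := D_cont (i := 4) hu (by norm_num)
  have hzero : (∫ x in (0:ℝ)..1, (D u 4 x - (β + Yq u) * D u 2 x + k * u x) * u x) = 0 := by
    have : (∫ x in (0:ℝ)..1, (D u 4 x - (β + Yq u) * D u 2 x + k * u x) * u x)
        = ∫ x in (0:ℝ)..1, (0:ℝ) := by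
      apply integral_congr
      intro x hx
      rw [uIcc01] at hx
      show (D u 4 x - (β + Yq u) * D u 2 x + k * u x) * u x = 0
      rw [heq x hx, zero_mul]
    simpa using this
  have e1 : (∫ x in (0:ℝ)..1, (D u 4 x - (β + Yq u) * D u 2 x + k * u x) * u x)
      = (∫ x in (0:ℝ)..1, D u 4 x * u x) - (β + Yq u) * (∫ x in (0:ℝ)..1, D u 2 x * u x)
        + k * Xq u := by
    unfold Xq
    rw [← intervalIntegral.integral_const_mul, ← intervalIntegral.integral_const_mul,
      ← intervalIntegral.integral_sub, ← intervalIntegral.integral_add]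
    · congr 1; ext x; ring
    · apply intInt
      exact (hc4.mul hcu).sub (continuousOn_const.mul (hc2.mul hcu))
    · apply intInt
      exact continuousOn_const.mul (hcu.pow 2)
    · exact intInt (hc4.mul hcu)
    · exact intInt (continuousOn_const.mul (hc2.mul hcu))
  rw [hzero, int_D4_mul_u hu h0 h1 h20 h21, int_D2_mul_u hu h0 h1] at e1
  have hpow : (∫ x in (0:ℝ)..1, k * (u x * u x)) = k * Xq u := by
    rw [intervalIntegral.integral_const_mul]
    unfold Xq
    congr 1
    apply integral_congr
    intro x _; ring
  linarith [e1]

end energy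
/-- clamp to [0,1] -/
def cl (x : ℝ) : ℝ := max 0 (min 1 x)

lemma cl_mem (x : ℝ) : cl x ∈ II :=
  ⟨le_max_left _ _, max_le (by norm_num) (min_le_left _ _)⟩

lemma cl_eq {x : ℝ} (hx : x ∈ II) : cl x = x := by
  unfold cl
  rw [min_eq_right hx.2, max_eq_right hx.1]

lemma cl_neg {x : ℝ} (hx : 0 ≤ x) : cl (-x) = 0 := by
  unfold cl
  rw [min_eq_right (by linarith), max_eq_left (by linarith)]

lemma cl_continuous : Continuous cl :=
  continuous_const.max (continuous_const.min continuous_id)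

lemma min_abs_mem (x : ℝ) : min 1 |x| ∈ II :=
  ⟨le_min zero_le_one (abs_nonneg x), min_le_left _ _⟩

lemma min_abs_eq {x : ℝ} (h0 : 0 ≤ x) (h1 : x ≤ 1) : min 1 |x| = x := by
  rw [_root_.abs_of_nonneg h0, min_eq_right h1]

lemma min_abs_eq_neg {x : ℝ} (h0 : x ≤ 0) (h1 : -1 ≤ x) : min 1 |x| = -x := by
  rw [_root_.abs_of_nonpos h0, min_eq_right (by linarith)]

/-- odd 2-periodic-ready extension of a function on [0,1], as a complex function -/
def oddExt (g : ℝ → ℝ) : ℝ → ℂ := fun x => ((g (cl x) : ℂ)) - ((g (cl (-x)) : ℂ))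

/-- even extension -/
def evenExt (g : ℝ → ℝ) : ℝ → ℂ := fun x => ((g (min 1 |x|) : ℝ) : ℂ)

lemma oddExt_pos (g : ℝ → ℝ) (hg0 : g 0 = 0) {x : ℝ} (hx : x ∈ II) :
    oddExt g x = (g x : ℂ) := by
  unfold oddExt
  rw [cl_eq hx, cl_neg hx.1, hg0]
  simp

lemma oddExt_neg (g : ℝ → ℝ) (hg0 : g 0 = 0) {x : ℝ} (hx : -x ∈ II) :
    oddExt g x = -(g (-x) : ℂ) := by
  unfold oddExt
  have : cl x = 0 := by
    have : 0 ≤ -x := hx.1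
    have hx' : cl (-(-x)) = 0 := cl_neg this
    simpa using hx'
  rw [this, cl_eq hx, hg0]
  simp

lemma evenExt_pos (g : ℝ → ℝ) {x : ℝ} (hx : x ∈ II) : evenExt g x = (g x : ℂ) := by
  unfold evenExt; rw [min_abs_eq hx.1 hx.2]

lemma evenExt_neg (g : ℝ → ℝ) (x : ℝ) : evenExt g (-x) = evenExt g x := by
  unfold evenExt; rw [abs_neg]

lemma oddExt_continuous {g : ℝ → ℝ} (hg : ContinuousOn g II) : Continuous (oddExt g) := by
  apply Continuous.sub
  · exact Complex.continuous_ofReal.comp (hg.comp_continuous cl_continuous cl_mem)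
  · exact Complex.continuous_ofReal.comp
      (hg.comp_continuous (cl_continuous.comp continuous_neg) (fun x => cl_mem (-x)))

lemma evenExt_continuous {g : ℝ → ℝ} (hg : ContinuousOn g II) : Continuous (evenExt g) :=
  Complex.continuous_ofReal.comp
    (hg.comp_continuous ((continuous_const.min continuous_abs)) min_abs_mem)

lemma _root_.HasDerivWithinAt.ofRealC {g : ℝ → ℝ} {d x : ℝ} {s : Set ℝ}
    (h : HasDerivWithinAt g d s x) :
    HasDerivWithinAt (fun y => ((g y : ℝ) : ℂ)) (d : ℂ) s x := by
  have h2 := Complex.ofRealCLM.hasFDerivAt.comp_hasFDerivWithinAt x h.hasFDerivWithinAt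
  have h3 := h2.hasDerivWithinAt
  simpa [Function.comp_def] using h3
section derivs
variable {g g' : ℝ → ℝ} (hd : ∀ x ∈ II, HasDerivWithinAt g (g' x) II x)

include hd in
lemma interior_hasDerivAt {x : ℝ} (h0 : 0 < x) (h1 : x < 1) :
    HasDerivAt g (g' x) x :=
  (hd x ⟨h0.le, h1.le⟩).hasDerivAt (Icc_mem_nhds h0 h1)

include hd in
lemma oddExt_hasDeriv (hg0 : g 0 = 0) :
    ∀ x ∈ Ioo (-1:ℝ) 1, HasDerivWithinAt (oddExt g) (evenExt g' x) (Ioi x) x := by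
  intro x hx
  obtain ⟨hxl, hxr⟩ := hx
  rcases lt_trichotomy x 0 with hneg | rfl | hpos
  · -- x ∈ (-1, 0)
    have hx1 : 0 < -x := by linarith
    have hx2 : -x < 1 := by linarith
    have hA : HasDerivAt g (g' (-x)) (-x) := interior_hasDerivAt hd hx1 hx2
    have hneg' : HasDerivAt (fun y : ℝ => -y) (-1) x := (hasDerivAt_id x).neg
    have hB : HasDerivAt (fun y : ℝ => g (-y)) (g' (-x) * -1) x := hA.comp x hneg'
    have hC : HasDerivAt (fun y : ℝ => -(g (-y))) (g' (-x)) x := by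
      simpa using hB.fun_neg
    have hD : HasDerivAt (fun y : ℝ => -((g (-y) : ℝ) : ℂ)) ((g' (-x) : ℂ)) x := by
      simpa using hC.ofReal_comp
    have heq : oddExt g =ᶠ[nhds x] fun y : ℝ => -((g (-y) : ℝ) : ℂ) := by
      filter_upwards [isOpen_Ioo.mem_nhds (show x ∈ Ioo (-1:ℝ) 0 from ⟨hxl, hneg⟩)] with y hy
      exact oddExt_neg g hg0 ⟨by linarith [hy.2], by linarith [hy.1]⟩
    have : HasDerivAt (oddExt g) ((g' (-x) : ℂ)) x := hD.congr_of_eventuallyEq heq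
    have hval : evenExt g' x = ((g' (-x) : ℝ) : ℂ) := by
      unfold evenExt; rw [min_abs_eq_neg hneg.le hxl.le]
    rw [hval]
    exact this.hasDerivWithinAt
  · -- x = 0
    have hA : HasDerivWithinAt g (g' 0) II 0 := hd 0 ⟨le_refl _, zero_le_one⟩
    have hB : HasDerivWithinAt (fun y : ℝ => ((g y : ℝ) : ℂ)) ((g' 0 : ℂ)) II 0 := hA.ofRealC
    have hC := hB.mono (Ioo_subset_Icc_self : Ioo (0:ℝ) 1 ⊆ II)
    have hD : HasDerivWithinAt (oddExt g) ((g' 0 : ℂ)) (Ioo (0:ℝ) 1) 0 := by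
      apply hC.congr
      · intro y hy
        exact oddExt_pos g hg0 ⟨hy.1.le, hy.2.le⟩
      · rw [oddExt_pos g hg0 (show (0:ℝ) ∈ II from ⟨le_refl _, zero_le_one⟩)]
    have hval : evenExt g' 0 = ((g' 0 : ℝ) : ℂ) := by
      unfold evenExt; norm_num
    rw [hval]
    exact hD.mono_of_mem_nhdsWithin (Ioo_mem_nhdsGT_of_mem ⟨le_refl _, zero_lt_one⟩)
  · -- x ∈ (0, 1)
    have hA : HasDerivAt g (g' x) x := interior_hasDerivAt hd hpos hxr
    have hB : HasDerivAt (fun y : ℝ => ((g y : ℝ) : ℂ)) ((g' x : ℂ)) x := hA.ofReal_comp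
    have heq : oddExt g =ᶠ[nhds x] fun y : ℝ => ((g y : ℝ) : ℂ) := by
      filter_upwards [isOpen_Ioo.mem_nhds (show x ∈ Ioo (0:ℝ) 1 from ⟨hpos, hxr⟩)] with y hy
      exact oddExt_pos g hg0 ⟨hy.1.le, hy.2.le⟩
    have : HasDerivAt (oddExt g) ((g' x : ℂ)) x := hB.congr_of_eventuallyEq heq
    have hval : evenExt g' x = ((g' x : ℝ) : ℂ) := by
      unfold evenExt; rw [min_abs_eq hpos.le hxr.le]
    rw [hval]
    exact this.hasDerivWithinAt

include hd in
lemma evenExt_hasDeriv (hg'0 : g' 0 = 0) :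
    ∀ x ∈ Ioo (-1:ℝ) 1, HasDerivWithinAt (evenExt g) (oddExt g' x) (Ioi x) x := by
  intro x hx
  obtain ⟨hxl, hxr⟩ := hx
  rcases lt_trichotomy x 0 with hneg | rfl | hpos
  · have hx1 : 0 < -x := by linarith
    have hx2 : -x < 1 := by linarith
    have hA : HasDerivAt g (g' (-x)) (-x) := interior_hasDerivAt hd hx1 hx2
    have hneg' : HasDerivAt (fun y : ℝ => -y) (-1) x := (hasDerivAt_id x).neg
    have hB : HasDerivAt (fun y : ℝ => g (-y)) (g' (-x) * -1) x := hA.comp x hneg'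
    have hD : HasDerivAt (fun y : ℝ => ((g (-y) : ℝ) : ℂ)) (-(g' (-x) : ℂ)) x := by
      have := hB.ofReal_comp
      convert this using 1
      push_cast
      ring
    have heq : evenExt g =ᶠ[nhds x] fun y : ℝ => ((g (-y) : ℝ) : ℂ) := by
      filter_upwards [isOpen_Ioo.mem_nhds (show x ∈ Ioo (-1:ℝ) 0 from ⟨hxl, hneg⟩)] with y hy
      unfold evenExt
      rw [min_abs_eq_neg hy.2.le hy.1.le]
    have hder : HasDerivAt (evenExt g) (-(g' (-x) : ℂ)) x := hD.congr_of_eventuallyEq heq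
    have hval : oddExt g' x = -((g' (-x) : ℝ) : ℂ) :=
      oddExt_neg g' hg'0 ⟨by linarith [hxl], by linarith⟩
    rw [hval]
    exact hder.hasDerivWithinAt
  · have hA : HasDerivWithinAt g (g' 0) II 0 := hd 0 ⟨le_refl _, zero_le_one⟩
    have hB : HasDerivWithinAt (fun y : ℝ => ((g y : ℝ) : ℂ)) ((g' 0 : ℂ)) II 0 := hA.ofRealC
    have hC := hB.mono (Ioo_subset_Icc_self : Ioo (0:ℝ) 1 ⊆ II)
    have hD : HasDerivWithinAt (evenExt g) ((g' 0 : ℂ)) (Ioo (0:ℝ) 1) 0 := by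
      apply hC.congr
      · intro y hy
        exact evenExt_pos g ⟨hy.1.le, hy.2.le⟩
      · exact evenExt_pos g ⟨le_refl _, zero_le_one⟩
    have hval : oddExt g' 0 = ((g' 0 : ℝ) : ℂ) := by
      rw [oddExt_pos g' hg'0 ⟨le_refl _, zero_le_one⟩]
    rw [hval]
    exact hD.mono_of_mem_nhdsWithin (Ioo_mem_nhdsGT_of_mem ⟨le_refl _, zero_lt_one⟩)
  · have hA : HasDerivAt g (g' x) x := interior_hasDerivAt hd hpos hxr
    have hB : HasDerivAt (fun y : ℝ => ((g y : ℝ) : ℂ)) ((g' x : ℂ)) x := hA.ofReal_comp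
    have heq : evenExt g =ᶠ[nhds x] fun y : ℝ => ((g y : ℝ) : ℂ) := by
      filter_upwards [isOpen_Ioo.mem_nhds (show x ∈ Ioo (0:ℝ) 1 from ⟨hpos, hxr⟩)] with y hy
      exact evenExt_pos g ⟨hy.1.le, hy.2.le⟩
    have hder : HasDerivAt (evenExt g) ((g' x : ℂ)) x := hB.congr_of_eventuallyEq heq
    have hval : oddExt g' x = ((g' x : ℝ) : ℂ) := oddExt_pos g' hg'0 ⟨hpos.le, hxr.le⟩
    rw [hval]
    exact hder.hasDerivWithinAt

end derivs
lemma hab2 : (-1:ℝ) < -1 + 2 := by norm_num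

/-- shorthand for Fourier coefficients on [-1, 1] -/
def cF (f : ℝ → ℂ) (n : ℤ) : ℂ := fourierCoeffOn hab2 f n

lemma coeff_rel (f f' : ℝ → ℂ) (hf : Continuous f)
    (hd : ∀ x ∈ Ioo (-1:ℝ) 1, HasDerivWithinAt f (f' x) (Ioi x) x)
    (hf'i : Continuous f')
    (hper : f (-1) = f (-1 + 2)) {n : ℤ} (hn : n ≠ 0) :
    cF f' n = (↑π * Complex.I * (n : ℂ)) * cF f n := by
  have key := fourierCoeffOn_of_hasDeriv_right hab2 hn
    (f := f) (f' := f')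
    (hf.continuousOn)
    (by
      intro x hx
      apply hd
      rw [show min (-1:ℝ) (-1+2) = -1 by norm_num, show max (-1:ℝ) (-1+2) = 1 by norm_num] at hx
      exact hx)
    (hf'i.intervalIntegrable _ _)
  rw [← hper, sub_self, mul_zero, zero_sub] at key
  have h2 : ((↑((-1:ℝ) + 2) : ℂ) - (↑(-1:ℝ) : ℂ)) = 2 := by norm_num
  rw [h2] at key
  -- key : cF f n = 1 / (-2πIn) * (-(2 * cF f' n))
  have hπ : (π : ℂ) ≠ 0 := Complex.ofReal_ne_zero.mpr Real.pi_ne_zero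
  have hI : Complex.I ≠ 0 := Complex.I_ne_zero
  have hnn : (n : ℂ) ≠ 0 := Int.cast_ne_zero.mpr hn
  unfold cF
  rw [key]
  push_cast
  field_simp
instance fact2 : Fact ((0:ℝ) < 2) := ⟨two_pos⟩

/-- Parseval on period 2 -/
lemma parseval (f : ℝ → ℂ) (hf : Continuous f) (hper : f (-1) = f (-1 + 2)) :
    Summable (fun n : ℤ => ‖cF f n‖^2) ∧
    ∑' n : ℤ, ‖cF f n‖^2
      = (1/2) * ((∫ x in (0:ℝ)..1, ‖f (-x)‖^2) + (∫ x in (0:ℝ)..1, ‖f x‖^2)) := by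
  set G : AddCircle (2:ℝ) → ℂ := AddCircle.liftIco 2 (-1) f with hG
  have hGc : Continuous G := AddCircle.liftIco_continuous (by exact hper) hf.continuousOn
  set Fc : C(AddCircle (2:ℝ), ℂ) := ⟨G, hGc⟩ with hFc
  set FL := ContinuousMap.toLp (E := ℂ) 2 AddCircle.haarAddCircle ℂ Fc with hFL
  have hcoeff : ∀ n : ℤ, fourierCoeff (FL : AddCircle (2:ℝ) → ℂ) n = cF f n := by
    intro n
    rw [fourierCoeff_toLp]
    show fourierCoeff G n = cF f n
    rw [hG, fourierCoeff_liftIco_eq]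
    rfl
  constructor
  · have hmem := lp.memℓp (fourierBasis.repr FL)
    have hsum := (memℓp_gen_iff (p := 2) (by norm_num)).mp hmem
    have : ∀ n : ℤ, ‖(fourierBasis.repr FL) n‖ ^ (2:ℝ≥0∞).toReal = ‖cF f n‖^2 := by
      intro n
      rw [fourierBasis_repr, hcoeff n]
      rw [show (2:ℝ≥0∞).toReal = (2:ℕ) by norm_num, Real.rpow_natCast]
    rwa [funext this] at hsum
  · have hpars := tsum_sq_fourierCoeff FL
    simp_rw [hcoeff] at hpars
    rw [hpars]
    -- now compute the integral
    have hae : ∀ᵐ t ∂(AddCircle.haarAddCircle (T := 2)), ‖FL t‖^2 = ‖G t‖^2 := by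
      filter_upwards [ContinuousMap.coeFn_toLp (𝕜 := ℂ) (p := 2) (AddCircle.haarAddCircle (T := 2)) Fc] with t ht
      rw [ht]; rfl
    rw [integral_congr_ae hae]
    have hvol : ∫ t, ‖G t‖^2 ∂(volume : Measure (AddCircle (2:ℝ)))
        = 2 * ∫ t, ‖G t‖^2 ∂(AddCircle.haarAddCircle) := by
      rw [AddCircle.volume_eq_smul_haarAddCircle, MeasureTheory.integral_smul_measure,
        ENNReal.toReal_ofReal (by norm_num : (0:ℝ) ≤ 2), smul_eq_mul]
    have hpre := AddCircle.intervalIntegral_preimage 2 (-1) (fun z => ‖G z‖^2)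
    -- hpre : ∫ x in -1..-1+2, ‖G ↑x‖^2 = ∫ b, ‖G b‖^2 ∂volume
    have hlift : ∫ x in (-1:ℝ)..(-1+2), ‖G x‖^2 = ∫ x in (-1:ℝ)..(-1+2), ‖f x‖^2 := by
      apply integral_congr
      intro x hx
      rw [uIcc_of_le (by norm_num : (-1:ℝ) ≤ -1+2)] at hx
      rcases lt_or_eq_of_le hx.2 with hlt | heq
      · show ‖G ↑x‖^2 = _
        rw [hG, AddCircle.liftIco_coe_apply ⟨hx.1, hlt⟩]
      · show ‖G ↑x‖^2 = _
        have hxeq : (x : AddCircle (2:ℝ)) = ((-1:ℝ) : AddCircle (2:ℝ)) := by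
          rw [heq, show (-1:ℝ)+2 = 2 + -1 by ring]
          simpa using AddCircle.coe_add_period 2 (-1)
        rw [hG, hxeq, AddCircle.liftIco_coe_apply
          (by constructor <;> norm_num : (-1:ℝ) ∈ Ico (-1:ℝ) (-1+2)), hper, heq]
    have hsplit : ∫ x in (-1:ℝ)..(-1+2), ‖f x‖^2
        = (∫ x in (-1:ℝ)..0, ‖f x‖^2) + ∫ x in (0:ℝ)..1, ‖f x‖^2 := by
      rw [show (-1:ℝ)+2 = 1 by norm_num]
      rw [← integral_add_adjacent_intervals (a := (-1:ℝ)) (b := 0) (c := 1)]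
      · exact ((hf.norm.pow 2).intervalIntegrable _ _)
      · exact ((hf.norm.pow 2).intervalIntegrable _ _)
    have hneg : (∫ x in (-1:ℝ)..0, ‖f x‖^2) = ∫ x in (0:ℝ)..1, ‖f (-x)‖^2 := by
      have := intervalIntegral.integral_comp_neg (a := (0:ℝ)) (b := 1)
        (fun x => ‖f x‖^2)
      rw [this]
      norm_num
    have : ∫ t, ‖G t‖^2 ∂(AddCircle.haarAddCircle)
        = (1/2) * ((∫ x in (0:ℝ)..1, ‖f (-x)‖^2) + ∫ x in (0:ℝ)..1, ‖f x‖^2) := by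
      rw [← hneg, ← hsplit, ← hlift, hpre, hvol]
      ring
    rw [this]

lemma sqnorm (r : ℝ) : ‖(r:ℂ)‖^2 = r^2 := by
  rw [Complex.norm_real, Real.norm_eq_abs, _root_.sq_abs]

lemma betaC_le {k : ℝ} (hk : 0 < k) {m : ℕ} (hm : 1 ≤ m) : betaC k ≤ mu k m := by
  apply csInf_le
  · refine ⟨0, ?_⟩
    rintro x ⟨n, hn, rfl⟩
    have h1 : (0:ℝ) ≤ k / ((n : ℝ)^2 * π^2) := div_nonneg hk.le (by positivity)
    have h2 : (0:ℝ) ≤ (n : ℝ)^2 * π^2 := by positivity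
    unfold mu; linarith
  · exact ⟨m, hm, rfl⟩

section spectral
variable {u : ℝ → ℝ} (hu : ContDiffOn ℝ 4 u II) (h0 : u 0 = 0) (h1b : u 1 = 0)
  (h20 : D u 2 0 = 0) (h21 : D u 2 1 = 0)

include hu h0 h1b h20 h21 in
lemma spectral {k : ℝ} (hk : 0 < k) : betaC k * Yq u ≤ Zq u + k * Xq u := by
  have hcu : ContinuousOn u II := by simpa [D_zero] using D_cont (i := 0) hu (by norm_num)
  have hc1 : ContinuousOn (D u 1) II := D_cont (i := 1) hu (by norm_num)
  have hc2 : ContinuousOn (D u 2) II := D_cont (i := 2) hu (by norm_num)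
  set h := oddExt u with hh
  set e1 := evenExt (D u 1) with he1
  set h2 := oddExt (D u 2) with hh2
  have hHc : Continuous h := oddExt_continuous hcu
  have hE1c : Continuous e1 := evenExt_continuous hc1
  have hH2c : Continuous h2 := oddExt_continuous hc2
  have mem1 : (1:ℝ) ∈ II := ⟨zero_le_one, le_refl 1⟩
  have memn1 : -(-1:ℝ) ∈ II := by norm_num
  have hper_h : h (-1) = h (-1 + 2) := by
    have e1v : h 1 = 0 := by rw [hh, oddExt_pos u h0 mem1, h1b]; norm_num
    have e2v : h (-1) = 0 := by
      rw [hh, oddExt_neg u h0 memn1]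
      norm_num [h1b]
    rw [show (-1:ℝ) + 2 = 1 by norm_num, e1v, e2v]
  have hper_e1 : e1 (-1) = e1 (-1 + 2) := by
    rw [show (-1:ℝ) + 2 = 1 by norm_num, he1, show (-1:ℝ) = -(1:ℝ) by norm_num,
      evenExt_neg (D u 1) 1]
  have hper_h2 : h2 (-1) = h2 (-1 + 2) := by
    have e1v : h2 1 = 0 := by rw [hh2, oddExt_pos (D u 2) h20 mem1, h21]; norm_num
    have e2v : h2 (-1) = 0 := by
      rw [hh2, oddExt_neg (D u 2) h20 memn1]
      norm_num [h21]
    rw [show (-1:ℝ) + 2 = 1 by norm_num, e1v, e2v]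
  have hd_h : ∀ x ∈ Ioo (-1:ℝ) 1, HasDerivWithinAt h (e1 x) (Ioi x) x :=
    oddExt_hasDeriv (u_deriv hu) h0
  have hd_e1 : ∀ x ∈ Ioo (-1:ℝ) 1, HasDerivWithinAt e1 (h2 x) (Ioi x) x :=
    evenExt_hasDeriv (D_deriv hu (by norm_num)) h20
  -- coefficient relations
  have r1 : ∀ n : ℤ, n ≠ 0 → cF e1 n = (↑π * Complex.I * (n:ℂ)) * cF h n :=
    fun n hn => coeff_rel h e1 hHc hd_h hE1c hper_h hn
  have r2 : ∀ n : ℤ, n ≠ 0 → cF h2 n = (↑π * Complex.I * (n:ℂ)) * cF e1 n :=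
    fun n hn => coeff_rel e1 h2 hE1c hd_e1 hH2c hper_e1 hn
  -- zeroth coefficient of e1 vanishes (FTC)
  have c0 : cF e1 0 = 0 := by
    have hftc : ∫ x in (0:ℝ)..1, D u 1 x = u 1 - u 0 := by
      apply integral_eq_sub_of_hasDeriv_right_of_le zero_le_one hcu
      · intro x hx
        exact ((u_deriv hu x ⟨hx.1.le, hx.2.le⟩).hasDerivAt
          (Icc_mem_nhds hx.1 hx.2)).hasDerivWithinAt
      · exact intInt hc1
    have hint : ∫ x in (0:ℝ)..1, e1 x = 0 := by
      have : ∫ x in (0:ℝ)..1, e1 x = ∫ x in (0:ℝ)..1, ((D u 1 x : ℝ) : ℂ) := by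
        apply integral_congr
        intro x hx
        rw [uIcc01] at hx
        exact evenExt_pos (D u 1) hx
      rw [this, intervalIntegral.integral_ofReal, hftc, h0, h1b]
      norm_num
    have hneg : ∫ x in (-1:ℝ)..0, e1 x = ∫ x in (0:ℝ)..1, e1 (-x) := by
      rw [intervalIntegral.integral_comp_neg (fun x => e1 x)]
      norm_num
    have hnegval : ∫ x in (0:ℝ)..1, e1 (-x) = ∫ x in (0:ℝ)..1, e1 x := by
      apply integral_congr
      intro x _
      exact evenExt_neg (D u 1) x
    unfold cF
    rw [fourierCoeffOn_eq_integral]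
    simp only [neg_zero, fourier_zero, one_smul]
    rw [show (-1:ℝ) + 2 = 1 by norm_num]
    rw [← integral_add_adjacent_intervals (a := (-1:ℝ)) (b := 0) (c := 1)
      (hE1c.intervalIntegrable _ _) (hE1c.intervalIntegrable _ _)]
    rw [hneg, hnegval, hint]
    simp
  -- Parseval for the three functions
  have P_h := parseval h hHc hper_h
  have P_e1 := parseval e1 hE1c hper_e1
  have P_h2 := parseval h2 hH2c hper_h2
  have sumX : ∑' n : ℤ, ‖cF h n‖^2 = Xq u := by
    rw [P_h.2]
    have v1 : ∫ x in (0:ℝ)..1, ‖h x‖^2 = Xq u := by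
      unfold Xq; apply integral_congr; intro x hx; rw [uIcc01] at hx
      show ‖h x‖^2 = (u x)^2
      rw [hh, oddExt_pos u h0 hx, sqnorm]
    have v2 : ∫ x in (0:ℝ)..1, ‖h (-x)‖^2 = Xq u := by
      unfold Xq; apply integral_congr; intro x hx; rw [uIcc01] at hx
      show ‖h (-x)‖^2 = (u x)^2
      rw [hh, oddExt_neg u h0 (by simpa using hx), norm_neg]
      rw [show -(-x) = x by ring, sqnorm]
    rw [v1, v2]; ring
  have sumY : ∑' n : ℤ, ‖cF e1 n‖^2 = Yq u := by
    rw [P_e1.2]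
    have v1 : ∫ x in (0:ℝ)..1, ‖e1 x‖^2 = Yq u := by
      unfold Yq; apply integral_congr; intro x hx; rw [uIcc01] at hx
      show ‖e1 x‖^2 = (D u 1 x)^2
      rw [he1, evenExt_pos (D u 1) hx, sqnorm]
    have v2 : ∫ x in (0:ℝ)..1, ‖e1 (-x)‖^2 = Yq u := by
      unfold Yq; apply integral_congr; intro x hx; rw [uIcc01] at hx
      show ‖e1 (-x)‖^2 = (D u 1 x)^2
      rw [he1, evenExt_neg (D u 1) x, evenExt_pos (D u 1) hx, sqnorm]
    rw [v1, v2]; ring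
  have sumZ : ∑' n : ℤ, ‖cF h2 n‖^2 = Zq u := by
    rw [P_h2.2]
    have v1 : ∫ x in (0:ℝ)..1, ‖h2 x‖^2 = Zq u := by
      unfold Zq; apply integral_congr; intro x hx; rw [uIcc01] at hx
      show ‖h2 x‖^2 = (D u 2 x)^2
      rw [hh2, oddExt_pos (D u 2) h20 hx, sqnorm]
    have v2 : ∫ x in (0:ℝ)..1, ‖h2 (-x)‖^2 = Zq u := by
      unfold Zq; apply integral_congr; intro x hx; rw [uIcc01] at hx
      show ‖h2 (-x)‖^2 = (D u 2 x)^2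
      rw [hh2, oddExt_neg (D u 2) h20 (by simpa using hx), norm_neg]
      rw [show -(-x) = x by ring, sqnorm]
    rw [v1, v2]; ring
  -- termwise inequality
  have hterm : ∀ n : ℤ, betaC k * ‖cF e1 n‖^2 ≤ ‖cF h2 n‖^2 + k * ‖cF h n‖^2 := by
    intro n
    rcases eq_or_ne n 0 with rfl | hn
    · rw [c0]
      have : (0:ℝ) ≤ ‖cF h2 0‖^2 + k * ‖cF h 0‖^2 := by positivity
      simpa using this
    · have hnorm : ‖(↑π * Complex.I * (n:ℂ))‖ = π * |(n:ℝ)| := by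
        rw [norm_mul, norm_mul, Complex.norm_real, Complex.norm_I, Real.norm_eq_abs,
          _root_.abs_of_pos Real.pi_pos, mul_one, Complex.norm_intCast]
      have hb : ‖cF e1 n‖^2 = π^2 * (n:ℝ)^2 * ‖cF h n‖^2 := by
        rw [r1 n hn, norm_mul, hnorm, mul_pow, mul_pow, _root_.sq_abs]
      have hd2 : ‖cF h2 n‖^2 = π^2 * (n:ℝ)^2 * ‖cF e1 n‖^2 := by
        rw [r2 n hn, norm_mul, hnorm, mul_pow, mul_pow, _root_.sq_abs]
      set w := ‖cF h n‖^2 with hw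
      have hwnn : 0 ≤ w := by positivity
      have hmu : betaC k ≤ mu k n.natAbs := betaC_le hk (by omega)
      have hcast : ((n.natAbs : ℕ) : ℝ)^2 = (n:ℝ)^2 := by
        rw [Nat.cast_natAbs, Int.cast_abs, _root_.sq_abs]
      have hpos : (0:ℝ) < (n:ℝ)^2 * π^2 := by
        have : (n:ℝ) ≠ 0 := Int.cast_ne_zero.mpr hn
        positivity
      have hmu2 : betaC k * ((n:ℝ)^2 * π^2) ≤ k + ((n:ℝ)^2 * π^2)^2 := by
        have := mul_le_mul_of_nonneg_right hmu hpos.le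
        calc betaC k * ((n:ℝ)^2 * π^2) ≤ mu k n.natAbs * ((n:ℝ)^2 * π^2) := this
          _ = k + ((n:ℝ)^2 * π^2)^2 := by
              unfold mu
              rw [hcast]
              field_simp
      rw [hb, hd2, hb]
      nlinarith [hmu2, hwnn, mul_le_mul_of_nonneg_right hmu2 hwnn]
  -- sum up
  have sY' : Summable (fun n : ℤ => betaC k * ‖cF e1 n‖^2) := P_e1.1.mul_left _
  have sRHS : Summable (fun n : ℤ => ‖cF h2 n‖^2 + k * ‖cF h n‖^2) :=
    P_h2.1.add (P_h.1.mul_left _)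
  have := Summable.tsum_le_tsum hterm sY' sRHS
  rw [tsum_mul_left, sumY, Summable.tsum_add P_h2.1 (P_h.1.mul_left _), tsum_mul_left, sumZ, sumX] at this
  exact this

end spectral
end
end BeamAux

open BeamAux

/-- If `β ≥ -β_c(k)`, the only solution of the stationary problem with `f = 0`
is the null solution. -/
theorem stmt0 (k β : ℝ) (hk : 0 < k) (hβ : -betaC k ≤ β)
    (u : ℝ → ℝ) (hu : IsStatSol k β u) :
    ∀ x ∈ Icc (0:ℝ) 1, u x = 0 := by
  obtain ⟨hreg, heq, h0, h1b, h20, h21⟩ := hu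
  have hcu : ContinuousOn u (Icc (0:ℝ) 1) := by
    simpa [D_zero] using D_cont (i := 0) hreg (by norm_num)
  have hYint : (∫ ξ in (0:ℝ)..1, (iteratedDerivWithin 1 u (Icc (0:ℝ) 1) ξ)^2) = Yq u := rfl
  have heq' : ∀ x ∈ Icc (0:ℝ) 1, D u 4 x - (β + Yq u) * D u 2 x + k * u x = 0 := by
    intro x hx
    have := heq x hx
    rw [hYint] at this
    exact this
  have hE : Zq u + (β + Yq u) * Yq u + k * Xq u = 0 :=
    energy hreg h0 h1b h20 h21 k β heq'
  have hS : betaC k * Yq u ≤ Zq u + k * Xq u := spectral hreg h0 h1b h20 h21 hk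
  have hXnn : 0 ≤ Xq u := by
    apply intervalIntegral.integral_nonneg zero_le_one
    intro x _; positivity
  have hYnn : 0 ≤ Yq u := by
    apply intervalIntegral.integral_nonneg zero_le_one
    intro x _; positivity
  have hZnn : 0 ≤ Zq u := by
    apply intervalIntegral.integral_nonneg zero_le_one
    intro x _; positivity
  -- conclude Y = 0
  have hY0 : Yq u = 0 := by nlinarith [hE, hS, hXnn, hYnn, hZnn]
  have hX0 : Xq u = 0 := by rw [hY0] at hE; nlinarith [hE, hXnn, hZnn]
  -- from ∫ u² = 0 conclude u = 0 on [0,1]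
  have hsq : EqOn (fun x => (u x)^2) (fun _ => (0:ℝ)) (Icc (0:ℝ) 1) := by
    have hint : IntegrableOn (fun x => (u x)^2) (Ioc (0:ℝ) 1) volume := by
      have := (intInt (hcu.pow 2))
      exact (intervalIntegrable_iff_integrableOn_Ioc_of_le zero_le_one).mp this
    have hX' : ∫ x in Ioc (0:ℝ) 1, (u x)^2 = 0 := by
      have : Xq u = ∫ x in Ioc (0:ℝ) 1, (u x)^2 := by
        unfold Xq
        rw [intervalIntegral.integral_of_le zero_le_one]
      rw [← this, hX0]
    have hae : (fun x => (u x)^2) =ᵐ[volume.restrict (Ioc (0:ℝ) 1)] 0 := by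
      have := (MeasureTheory.integral_eq_zero_iff_of_nonneg_ae
        (Filter.Eventually.of_forall (fun x => by positivity)) hint).mp hX'
      exact this
    have hIoc : EqOn (fun x => (u x)^2) (fun _ => (0:ℝ)) (Ioc (0:ℝ) 1) := by
      apply MeasureTheory.Measure.eqOn_Ioc_of_ae_eq (μ := volume) hae
      · exact (hcu.pow 2).mono Ioc_subset_Icc_self
      · exact continuousOn_const
    intro x hx
    show (u x)^2 = (0:ℝ)
    rcases eq_or_lt_of_le hx.1 with heq0 | hlt
    · rw [← heq0, h0]; norm_num
    · exact hIoc ⟨hlt, hx.2⟩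
  intro x hx
  have := hsq hx
  simpa using pow_eq_zero_iff (n := 2) (by norm_num) |>.mp this
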